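/- Let X be a positive random variable with continuous, strictly increasing distribution function on (0, ∞), E[X] = 1, σ² = E[X²] < ∞, and survival function G. Suppose all N companies are identical, with ρ̂₁ = 1/π¹₁ + 1/(γ₁σ²) and E^bau₁ = π⁰₁/π¹₁, and each faces the same intermediated price P ∈ (0, λ) and spot price S ∈ (0, P). Let 0 < A < Â, τ = (N·E^bau₁ − Â)/(Nρ̂₁), and assume the clearing and targeting conditions: N·VaR_{P/λ}(X)·(E^bau₁ − P·ES_{P/λ}(X)ρ̂₁) = A and N·(E^bau₁ − P·ES_{P/λ}(X)ρ̂₁) = Â. Then: (i) VaR_{P/λ}(X) = A/Â and P = λ·G(A/Â); (ii) P·ES_{P/λ}(X) = τ, so each company's maximal expected market wealth equals its maximal expected tax wealth at rate τ; (iii) the aggregate intermediary wealth is W^mar_F = A·(P − S), and the regulator's expected market wealth (ES_{P/λ}(X) − VaR_{P/λ}(X))·P·Â + S·A equals τ·Â − A·(P − S) = W^tax_R − W^mar_F, where W^tax_R = τ·Â. -/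

import Mathlib

open MeasureTheory

/-- Value-at-risk at level `ε`: `VaR_ε(X) = inf {y | ℙ[X ≤ y] ≥ 1 − ε}`. -/
noncomputable def VaR {Ω : Type*} [MeasurableSpace Ω] (μ : Measure Ω)
    (X : Ω → ℝ) (ε : ℝ) : ℝ :=
  sInf {y : ℝ | 1 - ε ≤ (μ {ω | X ω ≤ y}).toReal}

/-- Expected shortfall at level `ε`: `ES_ε(X) = (1/ε)∫₀^ε VaR_u(X) du`. -/
noncomputable def ES {Ω : Type*} [MeasurableSpace Ω] (μ : Measure Ω)
    (X : Ω → ℝ) (ε : ℝ) : ℝ :=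
  (1 / ε) * ∫ u in (0 : ℝ)..ε, VaR μ X u

/-- For `ε ∈ (0,1)`, if the CDF is continuous, `X > 0` a.s., `X` integrable with
mean 1, then the CDF at `VaR μ X ε` equals `1 - ε`. -/
theorem cdf_VaR_eq {Ω : Type*} [MeasurableSpace Ω] (μ : Measure Ω)
    [IsProbabilityMeasure μ] (X : Ω → ℝ) (hXmeas : Measurable X)
    (hXint : Integrable X μ) (hXpos : ∀ᵐ ω ∂μ, 0 < X ω)
    (hEX : ∫ ω, X ω ∂μ = 1)
    (hcont : Continuous fun y : ℝ => (μ {ω | X ω ≤ y}).toReal)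
    (ε : ℝ) (hε0 : 0 < ε) (hε1 : ε < 1) :
    (μ {ω | X ω ≤ VaR μ X ε}).toReal = 1 - ε := by
  set F : ℝ → ℝ := fun y => (μ {ω | X ω ≤ y}).toReal with hF
  have hnull : μ {ω | ¬ 0 < X ω} = 0 := by
    simpa [ae_iff] using hXpos
  have hF0 : F 0 = 0 := by
    have : μ {ω | X ω ≤ 0} = 0 := by
      apply measure_mono_null _ hnull
      intro ω hω
      simp only [Set.mem_setOf_eq] at hω ⊢
      linarith
    simp [hF, this]
  have hFmono : Monotone F := by
    intro y z hyz
    apply ENNReal.toReal_mono (measure_ne_top μ _)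
    exact measure_mono fun ω hω => le_trans hω hyz
  -- Markov: at M = 2/ε, F M ≥ 1 - ε
  set M : ℝ := 2 / ε with hM
  have hM0 : 0 < M := by positivity
  have hmarkov : M * (μ {ω | M ≤ X ω}).toReal ≤ 1 := by
    have := mul_meas_ge_le_integral_of_nonneg
      (μ := μ) (f := X) (hXpos.mono fun ω h => h.le) hXint M
    simpa [hEX, Measure.real] using this
  have hFM : 1 - ε ≤ F M := by
    have hcompl : μ {ω | X ω ≤ M} = 1 - μ {ω | M < X ω} := by
      have hms : MeasurableSet {ω | M < X ω} := hXmeas measurableSet_Ioi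
      have := measure_compl hms (measure_ne_top μ _)
      have hsets : {ω | M < X ω}ᶜ = {ω | X ω ≤ M} := by
        ext ω; simp [not_lt]
      rw [hsets] at this
      simpa using this
    have h1 : (μ {ω | M < X ω}).toReal ≤ (μ {ω | M ≤ X ω}).toReal := by
      apply ENNReal.toReal_mono (measure_ne_top μ _)
      refine measure_mono fun ω hω => ?_
      simp only [Set.mem_setOf_eq] at hω ⊢
      exact le_of_lt hω
    have h2 : (μ {ω | M ≤ X ω}).toReal ≤ 1 / M := by
      rw [le_div_iff₀ hM0]; linarith [hmarkov]
    have h3 : 1 / M = ε / 2 := by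
      rw [hM]; field_simp
    have h4 : (μ {ω | X ω ≤ M}).toReal = 1 - (μ {ω | M < X ω}).toReal := by
      rw [hcompl, ENNReal.toReal_sub_of_le (measure_mono (Set.subset_univ _) |>.trans
        (by simp)) (by simp)]
      simp
    have : F M = 1 - (μ {ω | M < X ω}).toReal := h4
    rw [this]
    linarith
  set T : Set ℝ := {y : ℝ | 1 - ε ≤ F y} with hT
  have hTne : T.Nonempty := ⟨M, hFM⟩
  have hTbdd : BddBelow T := by
    refine ⟨0, fun y hy => ?_⟩
    by_contra hy0
    push_neg at hy0
    have h1 : F y ≤ F 0 := hFmono hy0.le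
    rw [hF0] at h1
    have h2 : 1 - ε ≤ F y := hy
    linarith
  have hTclosed : IsClosed T := by
    have : T = F ⁻¹' Set.Ici (1 - ε) := rfl
    rw [this]
    exact IsClosed.preimage hcont isClosed_Ici
  have hmem : sInf T ∈ T := hTclosed.csInf_mem hTne hTbdd
  -- IVT: there is c ∈ [0, M] with F c = 1 - ε
  obtain ⟨c, hc, hFc⟩ : ∃ c ∈ Set.Icc (0:ℝ) M, F c = 1 - ε := by
    have := intermediate_value_Icc hM0.le hcont.continuousOn (a := 0) (b := M)
    apply this
    constructor
    · rw [hF0]; linarith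
    · exact hFM
  have hle : sInf T ≤ c := csInf_le hTbdd (by rw [hT]; exact le_of_eq hFc.symm)
  have h1 : F (sInf T) ≤ 1 - ε := by
    calc F (sInf T) ≤ F c := hFmono hle
    _ = 1 - ε := hFc
  have h2 : 1 - ε ≤ F (sInf T) := hmem
  have : F (sInf T) = 1 - ε := le_antisymm h1 h2
  simpa [VaR, hF, hT] using this

theorem intermediated_market_random_emissions_identical_companies
    {Ω : Type*} [MeasurableSpace Ω] (μ : Measure Ω) [IsProbabilityMeasure μ]
    (X : Ω → ℝ) (hXmeas : Measurable X) (hXint : Integrable X μ)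
    (hXpos : ∀ᵐ ω ∂μ, 0 < X ω)
    (hEX : ∫ ω, X ω ∂μ = 1)
    (hX2int : Integrable (fun ω => X ω ^ 2) μ)
    (σ2 : ℝ) (hσ2 : σ2 = ∫ ω, X ω ^ 2 ∂μ)
    (hcont : Continuous fun y : ℝ => (μ {ω | X ω ≤ y}).toReal)
    (hstrict : StrictMonoOn (fun y : ℝ => (μ {ω | X ω ≤ y}).toReal) (Set.Ioi 0))
    (G : ℝ → ℝ) (hG : ∀ t, G t = (μ {ω | t < X ω}).toReal)
    (N : ℕ) (hN : 0 < N)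
    (π01 π11 γ1 : ℝ) (hπ01 : 0 < π01) (hπ11 : 0 < π11) (hγ1 : 0 < γ1)
    (ρhat1 E1 W1 : ℝ)
    (hρhat1 : ρhat1 = 1 / π11 + 1 / (γ1 * σ2)) (hE1 : E1 = π01 / π11)
    (hW1 : W1 = π01 ^ 2 / (2 * π11))
    (lam P S : ℝ) (hP0 : 0 < P) (hPlam : P < lam) (hS0 : 0 < S) (hSP : S < P)
    (A Ahat : ℝ) (hA : 0 < A) (hAAhat : A < Ahat)
    (τ : ℝ) (hτ : τ = (N * E1 - Ahat) / (N * ρhat1))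
    (hclear : N * (VaR μ X (P / lam) * (E1 - P * ES μ X (P / lam) * ρhat1)) = A)
    (htarget : N * (E1 - P * ES μ X (P / lam) * ρhat1) = Ahat)
    (WmarF WtaxR : ℝ)
    (hWmarF : WmarF
      = N * (VaR μ X (P / lam) * (E1 - P * ES μ X (P / lam) * ρhat1) * (P - S)))
    (hWtaxR : WtaxR = τ * Ahat) :
    -- (i)
    VaR μ X (P / lam) = A / Ahat ∧
    P = lam * G (A / Ahat) ∧
    -- (ii)
    P * ES μ X (P / lam) = τ ∧
    W1 - P * ES μ X (P / lam) * (E1 - P * ES μ X (P / lam) / 2 * ρhat1)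
      = W1 - τ * (E1 - τ / 2 * ρhat1) ∧
    -- (iii)
    WmarF = A * (P - S) ∧
    (ES μ X (P / lam) - VaR μ X (P / lam)) * P * Ahat + S * A
      = τ * Ahat - A * (P - S) ∧
    τ * Ahat - A * (P - S) = WtaxR - WmarF := by
  have hlam : 0 < lam := lt_trans hP0 hPlam
  have hε0 : 0 < P / lam := div_pos hP0 hlam
  have hε1 : P / lam < 1 := (div_lt_one hlam).mpr hPlam
  set v := VaR μ X (P / lam) with hvdef
  set e := ES μ X (P / lam) with hedef
  have hAhat : (0:ℝ) < Ahat := lt_trans hA hAAhat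
  -- VaR = A / Ahat
  have hv : v * Ahat = A := by linear_combination hclear - v * htarget
  have hvar : v = A / Ahat := by
    field_simp
    linarith [hv]
  -- CDF relation
  have hcdf : (μ {ω | X ω ≤ v}).toReal = 1 - P / lam :=
    cdf_VaR_eq μ X hXmeas hXint hXpos hEX hcont (P / lam) hε0 hε1
  have hGv : G v = P / lam := by
    rw [hG]
    have hms : MeasurableSet {ω | X ω ≤ v} := hXmeas measurableSet_Iic
    have hc := measure_compl hms (measure_ne_top μ _)
    have hsets : {ω | X ω ≤ v}ᶜ = {ω | v < X ω} := by
      ext ω; simp [not_le]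
    rw [hsets] at hc
    rw [hc, ENNReal.toReal_sub_of_le (measure_mono (Set.subset_univ _)) (by simp)]
    simp [hcdf]
  have hPeq : P = lam * G (A / Ahat) := by
    rw [← hvar, hGv]
    field_simp
  -- σ2 > 0 and ρhat1 > 0
  have hσ2pos : 0 < σ2 := by
    rw [hσ2]
    rw [integral_pos_iff_support_of_nonneg_ae
      (hXpos.mono fun ω h => by positivity) hX2int]
    have hnull : μ {ω | ¬ 0 < X ω} = 0 := by simpa [ae_iff] using hXpos
    have hsub : (Function.support fun ω => X ω ^ 2)ᶜ ⊆ {ω | ¬ 0 < X ω} := by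
      intro ω hω
      simp only [Function.support, Set.mem_compl_iff, Set.mem_setOf_eq, not_not] at hω
      have : X ω = 0 := by
        exact pow_eq_zero_iff (n := 2) (by norm_num) |>.mp hω
      simp [Set.mem_setOf_eq, this]
    have hcnull : μ (Function.support fun ω => X ω ^ 2)ᶜ = 0 :=
      measure_mono_null hsub hnull
    by_contra h
    push_neg at h
    have h0 : μ (Function.support fun ω => X ω ^ 2) = 0 := le_antisymm h zero_le
    have : (μ Set.univ) = 0 := by
      have := measure_union_le (μ := μ) (Function.support fun ω => X ω ^ 2)
        (Function.support fun ω => X ω ^ 2)ᶜ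
      rw [Set.union_compl_self, h0, hcnull] at this
      simpa using this
    simp at this
  have hρpos : 0 < ρhat1 := by
    rw [hρhat1]
    have h1 : 0 < 1 / π11 := by positivity
    have h2 : 0 < 1 / (γ1 * σ2) := by positivity
    linarith
  have hNpos : (0:ℝ) < (N:ℝ) := Nat.cast_pos.mpr hN
  have hNρ : (N:ℝ) * ρhat1 ≠ 0 := by positivity
  -- P * ES = τ
  have hPES : P * e = τ := by
    rw [hτ]
    rw [eq_div_iff hNρ]
    linarith [htarget]
  refine ⟨hvar, hPeq, hPES, by rw [hPES], ?_, ?_, ?_⟩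
  · rw [hWmarF]; linear_combination (P - S) * hclear
  · linear_combination Ahat * hPES - P * hv
  · rw [hWtaxR, hWmarF]; linear_combination (P - S) * hclear
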